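/- Let h ≥ 3, let θ be a nontrivial equivalence relation on E_k with t equivalence classes C_0,…,C_{t−1}, and let φ : E_k → E_t be defined by φ(x) = i if x ∈ C_i. An h-ary relation ρ on E_k is a θ-closed h-regular relation if and only if there exists an h-regular relation ψ on E_t such that ρ = φ^{−1}(ψ), where φ^{−1}(ψ) = {(a_1,…,a_h) ∈ E_k^h : (φ(a_1),…,φ(a_h)) ∈ ψ}. -/

import Mathlib

/-- A finitary operation on `Fin k`: a pair of an arity `n` and a function
`(Fin n → Fin k) → Fin k`. -/
abbrev Ops (k : ℕ) := Σ n : ℕ, ((Fin n → Fin k) → Fin k)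

/-- The set of finitary operations preserving a binary relation `θ` on `Fin k`. -/
def PolB {k : ℕ} (θ : Set (Fin k × Fin k)) : Set (Ops k) :=
  {f | ∀ a b : Fin f.1 → Fin k, (∀ i, (a i, b i) ∈ θ) → (f.2 a, f.2 b) ∈ θ}

/-- The set of finitary operations preserving an `h`-ary relation `ρ` on `Fin k`. -/
def PolH {k h : ℕ} (ρ : Set (Fin h → Fin k)) : Set (Ops k) :=
  {f | ∀ M : Fin h → Fin f.1 → Fin k,
    (∀ i, (fun j => M j i) ∈ ρ) → (fun j => f.2 (M j)) ∈ ρ}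

/-- A clone: contains all projections and is closed under composition. -/
def IsClone {k : ℕ} (C : Set (Ops k)) : Prop :=
  (∀ (n : ℕ) (i : Fin n), (⟨n, fun x => x i⟩ : Ops k) ∈ C) ∧
  (∀ (n m : ℕ) (f : (Fin n → Fin k) → Fin k) (g : Fin n → (Fin m → Fin k) → Fin k),
    (⟨n, f⟩ : Ops k) ∈ C → (∀ i, (⟨m, g i⟩ : Ops k) ∈ C) →
    (⟨m, fun x => f fun i => g i x⟩ : Ops k) ∈ C)

/-- `C` is maximal in `D`: `C ⊊ D` and no clone lies strictly between them. -/
def MaximalIn {k : ℕ} (C D : Set (Ops k)) : Prop :=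
  C ⊂ D ∧ ∀ F : Set (Ops k), IsClone F → ¬(C ⊂ F ∧ F ⊂ D)

/-- `θ` is an equivalence relation (as a set of pairs). -/
def IsEquivRel {A : Type*} (θ : Set (A × A)) : Prop :=
  (∀ a, (a, a) ∈ θ) ∧ (∀ a b, (a, b) ∈ θ → (b, a) ∈ θ) ∧
    (∀ a b c, (a, b) ∈ θ → (b, c) ∈ θ → (a, c) ∈ θ)

/-- The diagonal relation `Δ` on `Fin k`. -/
def diag (k : ℕ) : Set (Fin k × Fin k) := {p | p.1 = p.2}

/-- A nontrivial equivalence relation: `Δ ⊊ θ ⊊ (Fin k)²`. -/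
def NontrivEquiv {k : ℕ} (θ : Set (Fin k × Fin k)) : Prop :=
  IsEquivRel θ ∧ diag k ⊂ θ ∧ θ ⊂ Set.univ

/-- Relational composition `α ∘ β = {(a,c) : ∃ b, (a,b) ∈ α ∧ (b,c) ∈ β}`. -/
def relComp {k : ℕ} (α β : Set (Fin k × Fin k)) : Set (Fin k × Fin k) :=
  {p | ∃ b, (p.1, b) ∈ α ∧ (b, p.2) ∈ β}

/-- The set of equivalence classes of `θ`. -/
def classesOf {A : Type*} (θ : Set (A × A)) : Set (Set A) :=
  {S | ∃ a : A, S = {b | (a, b) ∈ θ}}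

/-- Totally reflexive: every tuple with a repeated entry is in `ρ`. -/
def TotallyReflexive {k h : ℕ} (ρ : Set (Fin h → Fin k)) : Prop :=
  ∀ v : Fin h → Fin k, (∃ i j : Fin h, i ≠ j ∧ v i = v j) → v ∈ ρ

/-- Totally symmetric: closed under all permutations of coordinates. -/
def TotallySymmetric {k h : ℕ} (ρ : Set (Fin h → Fin k)) : Prop :=
  ∀ (v : Fin h → Fin k) (σ : Equiv.Perm (Fin h)), v ∈ ρ → v ∘ ⇑σ ∈ ρ

/-- The center of an `h`-ary relation: elements `a` such that every tuple whose
first coordinate is `a` lies in `ρ`. -/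
def center {k h : ℕ} (ρ : Set (Fin h → Fin k)) : Set (Fin k) :=
  {a | ∀ v : Fin h → Fin k, (∀ i : Fin h, (i : ℕ) = 0 → v i = a) → v ∈ ρ}

/-- An `h`-ary central relation. -/
def IsCentralRel {k h : ℕ} (ρ : Set (Fin h → Fin k)) : Prop :=
  ρ ≠ Set.univ ∧ TotallyReflexive ρ ∧ TotallySymmetric ρ ∧ (center ρ).Nonempty

/-- `η = {(u₁,…,u_h) : (u₁,u₂) ∈ θ}` (0-indexed: first two coordinates θ-related). -/
def eta {k : ℕ} (h : ℕ) (θ : Set (Fin k × Fin k)) : Set (Fin h → Fin k) :=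
  {v | ∀ i j : Fin h, (i : ℕ) = 0 → (j : ℕ) = 1 → (v i, v j) ∈ θ}

/-- `ρ_{l,θ}`: tuples whose coordinates from position `l` onwards can be moved
inside their θ-classes so as to land in `ρ` (0-indexed coordinates). -/
def rhoTh {k h : ℕ} (l : ℕ) (θ : Set (Fin k × Fin k)) (ρ : Set (Fin h → Fin k)) :
    Set (Fin h → Fin k) :=
  {a | ∃ u : Fin h → Fin k, (∀ j : Fin h, l ≤ (j : ℕ) → (u j, a j) ∈ θ) ∧
    (fun j : Fin h => if (j : ℕ) < l then a j else u j) ∈ ρ}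

/-- `ρ` is θ-closed: `ρ = ρ_{0,θ}`. -/
def ThetaClosed {k h : ℕ} (θ : Set (Fin k × Fin k)) (ρ : Set (Fin h → Fin k)) : Prop :=
  ρ = rhoTh 0 θ ρ

/-- `γ_σ = {(a_{σ(1)},…,a_{σ(h)}) : a ∈ γ}`. -/
def permuted {k h : ℕ} (σ : Equiv.Perm (Fin h)) (γ : Set (Fin h → Fin k)) :
    Set (Fin h → Fin k) :=
  {w | w ∘ ⇑σ.symm ∈ γ}

/-- A transversal of order `l` for the θ-classes: a system of representatives
(pairwise θ-unrelated, meeting every class) such that every tuple whose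
coordinates from position `l` onwards lie in `T` belongs to `ρ`. -/
def IsTransversal {k h : ℕ} (θ : Set (Fin k × Fin k)) (ρ : Set (Fin h → Fin k)) (l : ℕ)
    (T : Set (Fin k)) : Prop :=
  (∀ u ∈ T, ∀ v ∈ T, u ≠ v → (u, v) ∉ θ) ∧
  (∀ a : Fin k, ∃ u ∈ T, (a, u) ∈ θ) ∧
  (∀ w : Fin h → Fin k, (∀ j : Fin h, l ≤ (j : ℕ) → w j ∈ T) → w ∈ ρ)

/-- `ρ` is weakly θ-closed of order `l` (`1 ≤ l ≤ h-1`). -/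
def WeaklyThetaClosed {k h : ℕ} (θ : Set (Fin k × Fin k)) (ρ : Set (Fin h → Fin k))
    (l : ℕ) : Prop :=
  1 ≤ l ∧ l ≤ h - 1 ∧ (∃ T : Set (Fin k), IsTransversal θ ρ (l - 1) T) ∧
  ρ = ⋂ σ : Equiv.Perm (Fin h), permuted σ (rhoTh l θ ρ)

/-- Type I: `η ⊆ ρ` and every θ-class contains a central element of `ρ`. -/
def TypeI {k h : ℕ} (θ : Set (Fin k × Fin k)) (ρ : Set (Fin h → Fin k)) : Prop :=
  eta h θ ⊆ ρ ∧ ∀ a : Fin k, ∃ c : Fin k, (a, c) ∈ θ ∧ c ∈ center ρ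

/-- Type II: `ρ` is θ-closed. -/
def TypeII {k h : ℕ} (θ : Set (Fin k × Fin k)) (ρ : Set (Fin h → Fin k)) : Prop :=
  ThetaClosed θ ρ

/-- Type III: `ρ` is weakly θ-closed of some order and `η ⊆ ρ`. -/
def TypeIII {k h : ℕ} (θ : Set (Fin k × Fin k)) (ρ : Set (Fin h → Fin k)) : Prop :=
  (∃ l : ℕ, WeaklyThetaClosed θ ρ l) ∧ eta h θ ⊆ ρ

/-- `τ` is a diagonal relation through `θ`. -/
def IsDiagonal {k h : ℕ} (θ : Set (Fin k × Fin k)) (τ : Set (Fin h → Fin k)) : Prop :=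
  ∃ (ε₁ : Setoid (Fin h)) (ε₂ : Set (Fin h × Fin h)),
    (∀ p ∈ ε₂, (∀ j, ε₁.r p.1 j → p.1 ≤ j) ∧ (∀ j, ε₁.r p.2 j → p.2 ≤ j)) ∧
    (∀ i : Fin h, (∀ j, ε₁.r i j → i ≤ j) → (i, i) ∈ ε₂) ∧
    (∀ i j, (i, j) ∈ ε₂ → (j, i) ∈ ε₂) ∧
    (∀ i j l, (i, j) ∈ ε₂ → (j, l) ∈ ε₂ → (i, l) ∈ ε₂) ∧
    τ = {a | (∀ i j, ε₁.r i j → a i = a j) ∧ (∀ i j, (i, j) ∈ ε₂ → (a i, a j) ∈ θ)}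

/-- `ρ^l_{0,θ}`: `l`-tuples which can be moved inside their θ-classes so that
every `h`-tuple with all entries among the moved elements lies in `ρ`. -/
def rhoPow {k h : ℕ} (l : ℕ) (θ : Set (Fin k × Fin k)) (ρ : Set (Fin h → Fin k)) :
    Set (Fin l → Fin k) :=
  {u | ∃ e : Fin l → Fin k, (∀ i, (e i, u i) ∈ θ) ∧
    ∀ w : Fin h → Fin k, (∀ j, ∃ i, w j = e i) → w ∈ ρ}

/-- An `h`-regular family of equivalence relations. -/
def IsHRegFamily {A : Type*} (h : ℕ) {m : ℕ} (T : Fin m → Set (A × A)) : Prop :=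
  (∀ i, IsEquivRel (T i)) ∧
  (∀ i, (classesOf (T i)).ncard = h) ∧
  (∀ x : Fin m → A, (⋂ i, {b | (x i, b) ∈ T i}).Nonempty)

/-- The `h`-regular relation determined by the family `T`: tuples whose set of
components meets at most `h-1` classes of each member of the family. -/
def hRegRel {A : Type*} (h : ℕ) {m : ℕ} (T : Fin m → Set (A × A)) : Set (Fin h → A) :=
  {a | ∀ i : Fin m, {S ∈ classesOf (T i) | ∃ j : Fin h, a j ∈ S}.ncard ≤ h - 1}

/-- `ρ` is an `h`-regular relation: determined by some `h`-regular family. -/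
def IsHRegularRel {A : Type*} (h : ℕ) (ρ : Set (Fin h → A)) : Prop :=
  ∃ m : ℕ, 1 ≤ m ∧ ∃ T : Fin m → Set (A × A), IsHRegFamily h T ∧ ρ = hRegRel h T

section Auxiliary

lemma classEq {A : Type*} {θ : Set (A × A)} (hE : IsEquivRel θ) {a b : A}
    (hab : (a, b) ∈ θ) : {x | (a, x) ∈ θ} = {x | (b, x) ∈ θ} := by
  obtain ⟨hr, hs, ht⟩ := hE
  ext x
  exact ⟨fun hx => ht _ _ _ (hs _ _ hab) hx, fun hx => ht _ _ _ hab hx⟩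

lemma classes_pullback {k t : ℕ} (φ : Fin k → Fin t) (hs : Function.Surjective φ)
    (S : Set (Fin t × Fin t)) :
    classesOf {p : Fin k × Fin k | (φ p.1, φ p.2) ∈ S}
      = (fun C => φ ⁻¹' C) '' classesOf S := by
  ext C
  constructor
  · rintro ⟨a, rfl⟩
    exact ⟨{q | (φ a, q) ∈ S}, ⟨φ a, rfl⟩, rfl⟩
  · rintro ⟨D, ⟨p, rfl⟩, rfl⟩
    obtain ⟨a, rfl⟩ := hs p
    exact ⟨a, rfl⟩

lemma filtered_pullback {k t h : ℕ} (φ : Fin k → Fin t) (hs : Function.Surjective φ)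
    (S : Set (Fin t × Fin t)) (a : Fin h → Fin k) :
    {C ∈ classesOf {p : Fin k × Fin k | (φ p.1, φ p.2) ∈ S} | ∃ j : Fin h, a j ∈ C}
      = (fun C => φ ⁻¹' C) '' {D ∈ classesOf S | ∃ j : Fin h, φ (a j) ∈ D} := by
  ext C
  constructor
  · rintro ⟨hC, j, hj⟩
    rw [classes_pullback φ hs] at hC
    obtain ⟨D, hD, rfl⟩ := hC
    exact ⟨D, ⟨hD, j, hj⟩, rfl⟩
  · rintro ⟨D, ⟨hD, j, hj⟩, rfl⟩
    refine ⟨?_, j, hj⟩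
    rw [classes_pullback φ hs]
    exact ⟨D, hD, rfl⟩

lemma hRegRel_pullback {k t h m : ℕ} (φ : Fin k → Fin t) (hs : Function.Surjective φ)
    (S : Fin m → Set (Fin t × Fin t)) :
    hRegRel h (fun i => {p : Fin k × Fin k | (φ p.1, φ p.2) ∈ S i})
      = {a : Fin h → Fin k | (fun j => φ (a j)) ∈ hRegRel h S} := by
  ext a
  unfold hRegRel
  simp only [Set.mem_setOf_eq]
  refine forall_congr' fun i => ?_
  rw [filtered_pullback φ hs,
    Set.ncard_image_of_injective _ (Function.Surjective.preimage_injective hs)]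

lemma family_pullback {k t h m : ℕ} (φ : Fin k → Fin t) (hs : Function.Surjective φ)
    (S : Fin m → Set (Fin t × Fin t)) (hS : IsHRegFamily h S) :
    IsHRegFamily h (fun i => {p : Fin k × Fin k | (φ p.1, φ p.2) ∈ S i}) := by
  obtain ⟨hEq, hCard, hInt⟩ := hS
  refine ⟨fun i => ?_, fun i => ?_, fun x => ?_⟩
  · obtain ⟨hr, hsym, htr⟩ := hEq i
    exact ⟨fun a => hr _, fun a b hab => hsym _ _ hab,
      fun a b c h1 h2 => htr _ _ _ h1 h2⟩
  · rw [classes_pullback φ hs,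
      Set.ncard_image_of_injective _ (Function.Surjective.preimage_injective hs), hCard i]
  · obtain ⟨q, hq⟩ := hInt fun i => φ (x i)
    obtain ⟨b, rfl⟩ := hs q
    exact ⟨b, Set.mem_iInter.mpr fun i => Set.mem_iInter.mp hq i⟩

lemma saturation {k h m : ℕ} (hh : 3 ≤ h) {θ : Set (Fin k × Fin k)}
    (hθE : IsEquivRel θ) {T : Fin m → Set (Fin k × Fin k)} (hT : IsHRegFamily h T)
    (hclosed : ThetaClosed θ (hRegRel h T)) :
    ∀ i x y, (x, y) ∈ θ → (x, y) ∈ T i := by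
  obtain ⟨hTeq, hTcard, hTint⟩ := hT
  intro i x y hxy
  by_contra hxyT
  set B : Set (Fin k) := {b | (x, b) ∈ T i} with hB
  have hBmem : B ∈ classesOf (T i) := ⟨x, rfl⟩
  have hfin : (classesOf (T i)).Finite := Set.toFinite _
  have hnc : Nat.card ↥(classesOf (T i) \ {B}) = h - 1 := by
    rw [Nat.card_coe_set_eq, Set.ncard_diff_singleton_of_mem hBmem, hTcard i]
  let e : Fin (h - 1) ≃ ↥(classesOf (T i) \ {B}) := (Finite.equivFinOfCardEq hnc).symm
  have hc : ∀ r : Fin (h - 1), ∃ c : Fin k,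
      (e r : Set (Fin k)) = {b | (c, b) ∈ T i} := fun r => (e r).2.1
  choose c hcspec using hc
  -- representative classes differ from B
  have hxc : ∀ r, (x, c r) ∉ T i := by
    intro r hmem
    have : B = (e r : Set (Fin k)) := by rw [hcspec r]; exact classEq (hTeq i) hmem
    exact (e r).2.2 this.symm
  -- pick elements in each class, θ'-close to y for all other relations
  have hw : ∀ r : Fin (h - 1), ∃ wr : Fin k,
      (c r, wr) ∈ T i ∧ ∀ i', i' ≠ i → (y, wr) ∈ T i' := by
    intro r
    obtain ⟨wr, hwr⟩ := hTint fun i' => if i' = i then c r else y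
    refine ⟨wr, ?_, fun i' hne => ?_⟩
    · have := Set.mem_iInter.mp hwr i
      simpa using this
    · have := Set.mem_iInter.mp hwr i'
      simpa [hne] using this
  choose w hw1 hw2 using hw
  have hxw : ∀ r, (x, w r) ∉ T i := by
    intro r hmem
    exact hxc r (hTeq i |>.2.2 _ _ _ hmem ((hTeq i).2.1 _ _ (hw1 r)))
  have hww : ∀ r s, r ≠ s → (w r, w s) ∉ T i := by
    intro r s hrs hmem
    have hcc : (c r, c s) ∈ T i :=
      (hTeq i).2.2 _ _ _ (hw1 r) ((hTeq i).2.2 _ _ _ hmem ((hTeq i).2.1 _ _ (hw1 s)))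
    have : (e r : Set (Fin k)) = (e s : Set (Fin k)) := by
      rw [hcspec r, hcspec s]; exact classEq (hTeq i) hcc
    exact hrs (e.injective (Subtype.ext this))
  -- the tuple construction
  let vec : Fin k → Fin h → Fin k := fun z j =>
    if hj : (j : ℕ) = 0 then z else w ⟨(j : ℕ) - 1, by have := j.isLt; omega⟩
  have hvec0 : ∀ z, vec z ⟨0, by omega⟩ = z := fun z => rfl
  have hxvec : ∀ j : Fin h, (x, vec y j) ∉ T i := by
    intro j
    by_cases hj : (j : ℕ) = 0
    · simp only [vec, dif_pos hj]; exact hxyT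
    · simp only [vec, dif_neg hj]; exact hxw _
  have hyvec : ∀ (i') (j : Fin h), i' ≠ i → (y, vec y j) ∈ T i' := by
    intro i' j hne
    by_cases hj : (j : ℕ) = 0
    · simp only [vec, dif_pos hj]; exact (hTeq i').1 y
    · simp only [vec, dif_neg hj]; exact hw2 _ i' hne
  -- vec y ∈ ρ
  have ha : vec y ∈ hRegRel h T := by
    intro i'
    by_cases hii : i' = i
    · subst hii
      have hsub : {S ∈ classesOf (T i') | ∃ j : Fin h, vec y j ∈ S}
          ⊆ classesOf (T i') \ {B} := by
        rintro S ⟨⟨cS, rfl⟩, j, hjS⟩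
        refine ⟨⟨cS, rfl⟩, fun hSB => ?_⟩
        simp only [Set.mem_singleton_iff] at hSB
        have : vec y j ∈ B := hSB ▸ hjS
        exact hxvec j this
      calc {S ∈ classesOf (T i') | ∃ j : Fin h, vec y j ∈ S}.ncard
          ≤ (classesOf (T i') \ {B}).ncard := Set.ncard_le_ncard hsub (hfin.diff)
        _ = h - 1 := by rw [Set.ncard_diff_singleton_of_mem hBmem, hTcard i']
    · have hsub : {S ∈ classesOf (T i') | ∃ j : Fin h, vec y j ∈ S}
          ⊆ {{b | (y, b) ∈ T i'}} := by
        rintro S ⟨⟨cS, rfl⟩, j, hjS⟩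
        have hcy : (cS, y) ∈ T i' :=
          (hTeq i').2.2 _ _ _ hjS ((hTeq i').2.1 _ _ (hyvec i' j hii))
        simp only [Set.mem_singleton_iff]
        exact classEq (hTeq i') hcy
      have h1 : {S ∈ classesOf (T i') | ∃ j : Fin h, vec y j ∈ S}.ncard ≤ 1 := by
        calc {S ∈ classesOf (T i') | ∃ j : Fin h, vec y j ∈ S}.ncard
            ≤ ({{b | (y, b) ∈ T i'}} : Set (Set (Fin k))).ncard :=
              Set.ncard_le_ncard hsub (Set.toFinite _)
          _ = 1 := Set.ncard_singleton _
      omega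
  -- vec x ∉ ρ
  have hdistinct : ∀ j j' : Fin h, j ≠ j' → (vec x j, vec x j') ∉ T i := by
    intro j j' hne hmem
    by_cases hj : (j : ℕ) = 0 <;> by_cases hj' : (j' : ℕ) = 0
    · exact hne (Fin.ext (hj.trans hj'.symm))
    · simp only [vec, dif_pos hj, dif_neg hj'] at hmem
      exact hxw _ hmem
    · simp only [vec, dif_neg hj, dif_pos hj'] at hmem
      exact hxw _ ((hTeq i).2.1 _ _ hmem)
    · simp only [vec, dif_neg hj, dif_neg hj'] at hmem
      refine hww _ _ (fun hEq => ?_) hmem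
      have : (j : ℕ) - 1 = (j' : ℕ) - 1 := congrArg Fin.val hEq
      exact hne (Fin.ext (by omega))
  have hnotin : vec x ∉ hRegRel h T := by
    intro hmem
    have hle := hmem i
    have hinj : Function.Injective fun j : Fin h => {b | (vec x j, b) ∈ T i} := by
      intro j j' hEq
      by_contra hne
      refine hdistinct j j' hne ?_
      have hEq' : {b | (vec x j, b) ∈ T i} = {b | (vec x j', b) ∈ T i} := hEq
      have : vec x j' ∈ {b | (vec x j', b) ∈ T i} := (hTeq i).1 _
      rw [← hEq'] at this
      exact this
    have hrange : Set.range (fun j : Fin h => {b | (vec x j, b) ∈ T i})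
        ⊆ {S ∈ classesOf (T i) | ∃ j : Fin h, vec x j ∈ S} := by
      rintro S ⟨j, rfl⟩
      exact ⟨⟨_, rfl⟩, j, (hTeq i).1 _⟩
    have hge : h ≤ {S ∈ classesOf (T i) | ∃ j : Fin h, vec x j ∈ S}.ncard := by
      calc h = (Set.range fun j : Fin h => {b | (vec x j, b) ∈ T i}).ncard := by
              rw [← Set.image_univ, Set.ncard_image_of_injective _ hinj, Set.ncard_univ,
                Nat.card_eq_fintype_card, Fintype.card_fin]
        _ ≤ _ := Set.ncard_le_ncard hrange (Set.toFinite _)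
    omega
  -- contradiction via θ-closedness
  have hwin : vec x ∈ rhoTh 0 θ (hRegRel h T) := by
    refine ⟨vec y, fun j _ => ?_, ?_⟩
    · by_cases hj : (j : ℕ) = 0
      · simp only [vec, dif_pos hj]
        exact hθE.2.1 _ _ hxy
      · simp only [vec, dif_neg hj]
        exact hθE.1 _
    · have : (fun j : Fin h => if (j : ℕ) < 0 then vec x j else vec y j) = vec y := by
        funext j; simp
      rw [this]
      exact ha
  refine hnotin ?_
  rw [show hRegRel h T = rhoTh 0 θ (hRegRel h T) from hclosed]
  exact hwin

end Auxiliary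

/-- For `h ≥ 3` and `φ : E_k → E_t` the canonical surjection onto the θ-classes,
an `h`-ary relation `ρ` on `E_k` is a θ-closed `h`-regular relation iff there
is an `h`-regular relation `ψ` on `E_t` with `ρ = φ⁻¹(ψ)`. -/
theorem stmt18 (k t h : ℕ) (hh : 3 ≤ h)
    (θ : Set (Fin k × Fin k)) (hθ : NontrivEquiv θ)
    (φ : Fin k → Fin t) (hφsurj : Function.Surjective φ)
    (hφ : ∀ x y : Fin k, (x, y) ∈ θ ↔ φ x = φ y)
    (ρ : Set (Fin h → Fin k)) :
    (IsHRegularRel h ρ ∧ ThetaClosed θ ρ) ↔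
      ∃ ψ : Set (Fin h → Fin t), IsHRegularRel h ψ ∧
        ρ = {a | (fun j => φ (a j)) ∈ ψ} := by
  
  constructor
  · rintro ⟨⟨m, hm, T, hTfam, rfl⟩, hclosed⟩
    have hsat : ∀ i x y, (x, y) ∈ θ → (x, y) ∈ T i :=
      saturation hh hθ.1 hTfam hclosed
    set S : Fin m → Set (Fin t × Fin t) :=
      fun i => {q | ∃ x y, φ x = q.1 ∧ φ y = q.2 ∧ (x, y) ∈ T i} with hSdef
    have hpull : ∀ i, T i = {p : Fin k × Fin k | (φ p.1, φ p.2) ∈ S i} := by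
      intro i
      ext ⟨a, b⟩
      constructor
      · intro hab
        exact ⟨a, b, rfl, rfl, hab⟩
      · rintro ⟨x', y', hx', hy', hT'⟩
        have h1 : (a, x') ∈ T i := hsat i a x' ((hφ a x').mpr hx'.symm)
        have h2 : (y', b) ∈ T i := hsat i y' b ((hφ y' b).mpr hy')
        exact (hTfam.1 i).2.2 _ _ _ h1 ((hTfam.1 i).2.2 _ _ _ hT' h2)
    have hSfam : IsHRegFamily h S := by
      refine ⟨fun i => ?_, fun i => ?_, fun p => ?_⟩
      · refine ⟨fun q => ?_, ?_, ?_⟩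
        · obtain ⟨a, rfl⟩ := hφsurj q
          exact ⟨a, a, rfl, rfl, (hTfam.1 i).1 a⟩
        · rintro p q ⟨x1, y1, e1, e2, m1⟩
          exact ⟨y1, x1, e2, e1, (hTfam.1 i).2.1 _ _ m1⟩
        · rintro p q r ⟨x1, y1, e1, e2, m1⟩ ⟨x2, y2, e3, e4, m2⟩
          have hmid : (y1, x2) ∈ T i := hsat i _ _ ((hφ _ _).mpr (e2.trans e3.symm))
          exact ⟨x1, y2, e1, e4,
            (hTfam.1 i).2.2 _ _ _ m1 ((hTfam.1 i).2.2 _ _ _ hmid m2)⟩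
      · have hcard := hTfam.2.1 i
        rw [hpull i, classes_pullback φ hφsurj,
          Set.ncard_image_of_injective _ (Function.Surjective.preimage_injective hφsurj)]
          at hcard
        exact hcard
      · choose x hx using fun i => hφsurj (p i)
        obtain ⟨b, hb⟩ := hTfam.2.2 x
        refine ⟨φ b, Set.mem_iInter.mpr fun i => ?_⟩
        have hbi : (x i, b) ∈ T i := Set.mem_iInter.mp hb i
        rw [hpull i] at hbi
        show (p i, φ b) ∈ S i
        rwa [← hx i]
    refine ⟨hRegRel h S, ⟨m, hm, S, hSfam, rfl⟩, ?_⟩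
    rw [show T = fun i => {p : Fin k × Fin k | (φ p.1, φ p.2) ∈ S i} from funext hpull,
      hRegRel_pullback φ hφsurj]
  · rintro ⟨ψ, ⟨m, hm, S, hSfam, rfl⟩, rfl⟩
    refine ⟨⟨m, hm, _, family_pullback φ hφsurj S hSfam,
      (hRegRel_pullback φ hφsurj S).symm⟩, ?_⟩
    unfold ThetaClosed rhoTh
    ext a
    simp only [Set.mem_setOf_eq]
    constructor
    · intro ha
      refine ⟨a, fun j _ => (hφ _ _).mpr rfl, ?_⟩
      have heq : (fun j : Fin h => φ (if (j : ℕ) < 0 then a j else a j))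
          = fun j => φ (a j) := by
        funext j; simp
      show (fun j : Fin h => φ (if (j : ℕ) < 0 then a j else a j)) ∈ hRegRel h S
      rw [heq]
      exact ha
    · rintro ⟨u, hu, hmem⟩
      have heq : (fun j : Fin h => φ (if (j : ℕ) < 0 then a j else u j))
          = fun j => φ (u j) := by
        funext j; simp
      rw [heq] at hmem
      show (fun j => φ (a j)) ∈ hRegRel h S
      have heq2 : (fun j => φ (a j)) = fun j => φ (u j) :=
        funext fun j => ((hφ _ _).mp (hu j (Nat.zero_le _))).symm
      rw [heq2]
      exact hmem
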